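/- Let S be a set of positions in {1,…,m}×{1,…,n} such that there are no row indices i < i' and column indices j < j' with all four positions (i,j), (i,j'), (i',j), (i',j') in S. Suppose some finite collection of orthogonal cycles, all of whose positions lie in S, is positive. Then there exists no m-by-n TP₂ real matrix A with A i j = 1 for every (i,j) ∈ S; in particular, the partial matrix with data all equal to 1 at the positions of S (which is partial TP₂) admits no TP₂ completion. -/

import Mathlib

/-- `p 0, p 1, …, p (2k)` is an orthogonal cycle: it closes up, consecutive
even/odd positions share a row and consecutive odd/even positions share a
column. -/
def IsOrthoCycle {m n : ℕ} (k : ℕ) (p : ℕ → Fin m × Fin n) : Prop :=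
  1 ≤ k ∧ p 0 = p (2 * k) ∧
    ∀ i < k, (p (2 * i)).1 = (p (2 * i + 1)).1 ∧ (p (2 * i + 1)).2 = (p (2 * i + 2)).2

/-- The function 𝔠_C(i,j): the number of even-indexed positions p_{2l}
(1 ≤ l ≤ k) lying strictly below-right of (i,j), minus the corresponding
number of odd-indexed positions p_{2l−1}. -/
def cycleCount {m n : ℕ} (k : ℕ) (p : ℕ → Fin m × Fin n) (i j : ℕ) : ℤ :=
  (((Finset.Icc 1 k).filter fun l =>
      i < ((p (2 * l)).1 : ℕ) + 1 ∧ j < ((p (2 * l)).2 : ℕ) + 1).card : ℤ) -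
  (((Finset.Icc 1 k).filter fun l =>
      i < ((p (2 * l - 1)).1 : ℕ) + 1 ∧ j < ((p (2 * l - 1)).2 : ℕ) + 1).card : ℤ)

/-- A finite collection of orthogonal cycles is positive if the sum of the
functions 𝔠 is nonnegative at every pair and positive at some pair. -/
def IsPositiveCollection {m n N : ℕ} (K : Fin N → ℕ)
    (P : Fin N → ℕ → Fin m × Fin n) : Prop :=
  (∀ i j : ℕ, 0 ≤ ∑ a : Fin N, cycleCount (K a) (P a) i j) ∧
  (∃ i j : ℕ, 0 < ∑ a : Fin N, cycleCount (K a) (P a) i j)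


open Finset

section Aux
variable {m n : ℕ} (A : Matrix (Fin m) (Fin n) ℝ) (hm : 0 < m) (hn : 0 < n)

/-- Extended log matrix with a zero border at row/column 0 and clamped beyond. -/
noncomputable def Gf (i j : ℕ) : ℝ :=
  if 1 ≤ i ∧ 1 ≤ j then
    Real.log (A ⟨min (i-1) (m-1), by omega⟩ ⟨min (j-1) (n-1), by omega⟩) else 0

/-- Discrete mixed second difference of `Gf`. -/
noncomputable def Df (i j : ℕ) : ℝ :=
  Gf A hm hn (i+1) (j+1) - Gf A hm hn (i+1) j - Gf A hm hn i (j+1) + Gf A hm hn i j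

lemma box_id (u v : ℕ) (hu : u < m) (hv : v < n) :
    ∑ i ∈ range m, ∑ j ∈ range n,
      (if i < u + 1 ∧ j < v + 1 then Df A hm hn i j else 0)
      = Real.log (A ⟨u, hu⟩ ⟨v, hv⟩) := by
  have hfil : ∀ (w c : ℕ), c < w →
      (range w).filter (fun x => x < c + 1) = range (c+1) := by
    intro w c hc; ext x
    simp only [mem_filter, mem_range]
    omega
  have h1 : ∀ i, ∑ j ∈ range n, (if i < u + 1 ∧ j < v + 1 then Df A hm hn i j else 0)
      = if i < u + 1 then ∑ j ∈ range (v+1), Df A hm hn i j else 0 := by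
    intro i
    by_cases hi : i < u + 1
    · simp only [hi, true_and, if_true]
      rw [← hfil n v hv, Finset.sum_filter]
    · simp [hi]
  rw [Finset.sum_congr rfl fun i _ => h1 i, ← Finset.sum_filter, hfil m u hu]
  have h2 : ∀ i, ∑ j ∈ range (v+1), Df A hm hn i j
      = Gf A hm hn (i+1) (v+1) - Gf A hm hn i (v+1) := by
    intro i
    have hts := Finset.sum_range_sub
      (f := fun j => Gf A hm hn (i+1) j - Gf A hm hn i j) (n := v+1)
    have h0 : Gf A hm hn (i+1) 0 = 0 := by simp [Gf]
    have h0' : Gf A hm hn i 0 = 0 := by simp [Gf]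
    calc ∑ j ∈ range (v+1), Df A hm hn i j
        = ∑ j ∈ range (v+1),
            ((Gf A hm hn (i+1) (j+1) - Gf A hm hn i (j+1)) -
             (Gf A hm hn (i+1) j - Gf A hm hn i j)) := by
          apply Finset.sum_congr rfl; intro j _; simp only [Df]; ring
      _ = (Gf A hm hn (i+1) (v+1) - Gf A hm hn i (v+1)) -
          (Gf A hm hn (i+1) 0 - Gf A hm hn i 0) := hts
      _ = Gf A hm hn (i+1) (v+1) - Gf A hm hn i (v+1) := by rw [h0, h0']; ring
  rw [Finset.sum_congr rfl fun i _ => h2 i, Finset.sum_range_sub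
    (f := fun i => Gf A hm hn i (v+1))]
  have h0 : Gf A hm hn 0 (v+1) = 0 := by simp [Gf]
  rw [h0, sub_zero]
  simp only [Gf, Nat.le_add_left, and_self, if_pos, Nat.add_sub_cancel]
  have e1 : min u (m-1) = u := by omega
  have e2 : min v (n-1) = v := by omega
  simp only [e1, e2]

lemma cyc_sum (k : ℕ) (p : ℕ → Fin m × Fin n) :
    ∑ i ∈ range m, ∑ j ∈ range n, (cycleCount k p i j : ℝ) * Df A hm hn i j
      = ∑ l ∈ Finset.Icc 1 k,
          (Real.log (A (p (2*l)).1 (p (2*l)).2)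
            - Real.log (A (p (2*l-1)).1 (p (2*l-1)).2)) := by
  have key : ∀ i j : ℕ, (cycleCount k p i j : ℝ) * Df A hm hn i j
      = ∑ l ∈ Finset.Icc 1 k,
          ((if i < ((p (2*l)).1 : ℕ) + 1 ∧ j < ((p (2*l)).2 : ℕ) + 1
              then Df A hm hn i j else 0)
           - (if i < ((p (2*l-1)).1 : ℕ) + 1 ∧ j < ((p (2*l-1)).2 : ℕ) + 1
              then Df A hm hn i j else 0)) := by
    intro i j
    rw [Finset.sum_sub_distrib, ← Finset.sum_filter, ← Finset.sum_filter,
        Finset.sum_const, Finset.sum_const, nsmul_eq_mul, nsmul_eq_mul]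
    simp only [cycleCount]
    push_cast
    ring
  calc ∑ i ∈ range m, ∑ j ∈ range n, (cycleCount k p i j : ℝ) * Df A hm hn i j
      = ∑ i ∈ range m, ∑ l ∈ Finset.Icc 1 k, ∑ j ∈ range n,
          ((if i < ((p (2*l)).1 : ℕ) + 1 ∧ j < ((p (2*l)).2 : ℕ) + 1
              then Df A hm hn i j else 0)
           - (if i < ((p (2*l-1)).1 : ℕ) + 1 ∧ j < ((p (2*l-1)).2 : ℕ) + 1
              then Df A hm hn i j else 0)) := by
        refine Finset.sum_congr rfl fun i _ => ?_
        rw [Finset.sum_congr rfl fun j (_ : j ∈ range n) => key i j]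
        exact Finset.sum_comm
    _ = ∑ l ∈ Finset.Icc 1 k, ∑ i ∈ range m, ∑ j ∈ range n,
          ((if i < ((p (2*l)).1 : ℕ) + 1 ∧ j < ((p (2*l)).2 : ℕ) + 1
              then Df A hm hn i j else 0)
           - (if i < ((p (2*l-1)).1 : ℕ) + 1 ∧ j < ((p (2*l-1)).2 : ℕ) + 1
              then Df A hm hn i j else 0)) := Finset.sum_comm
    _ = ∑ l ∈ Finset.Icc 1 k,
          (Real.log (A (p (2*l)).1 (p (2*l)).2)
            - Real.log (A (p (2*l-1)).1 (p (2*l-1)).2)) := by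
        refine Finset.sum_congr rfl fun l _ => ?_
        rw [Finset.sum_congr rfl fun i (_ : i ∈ range m) => Finset.sum_sub_distrib _ _,
            Finset.sum_sub_distrib,
            box_id A hm hn _ _ (p (2*l)).1.isLt (p (2*l)).2.isLt,
            box_id A hm hn _ _ (p (2*l-1)).1.isLt (p (2*l-1)).2.isLt]

lemma cc_col (k : ℕ) (p : ℕ → Fin m × Fin n) (hc : IsOrthoCycle k p) (j : ℕ) :
    cycleCount k p 0 j = 0 := by
  have h : ∀ l ∈ Finset.Icc 1 k,
      ((0 < ((p (2*l)).1 : ℕ) + 1 ∧ j < ((p (2*l)).2 : ℕ) + 1) ↔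
       (0 < ((p (2*l-1)).1 : ℕ) + 1 ∧ j < ((p (2*l-1)).2 : ℕ) + 1)) := by
    intro l hl
    simp only [Finset.mem_Icc] at hl
    have h1 : 2*(l-1)+1 = 2*l - 1 := by omega
    have h2 : 2*(l-1)+2 = 2*l := by omega
    have hcol := (hc.2.2 (l-1) (by omega)).2
    rw [h1, h2] at hcol
    simp [hcol]
  unfold cycleCount
  rw [Finset.filter_congr h, sub_self]

lemma cc_row (k : ℕ) (p : ℕ → Fin m × Fin n) (hc : IsOrthoCycle k p) (i : ℕ) :
    cycleCount k p i 0 = 0 := by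
  unfold cycleCount
  rw [Finset.card_bij' (i := fun l _ => if l = k then 1 else l + 1)
    (j := fun l _ => if l = 1 then k else l - 1) ?hi ?hj ?li ?ri, sub_self]
  case hi =>
    intro l hl
    simp only [Finset.mem_filter, Finset.mem_Icc] at hl ⊢
    obtain ⟨⟨hl1, hlk⟩, hrow, -⟩ := hl
    by_cases hk : l = k
    · rw [if_pos hk]
      refine ⟨⟨le_refl 1, hc.1⟩, ?_, by omega⟩
      have e1 : (p 0).1 = (p 1).1 := (hc.2.2 0 hc.1).1
      have e2 : p 0 = p (2*k) := hc.2.1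
      have h3 : (2:ℕ)*1 - 1 = 1 := by omega
      rw [h3]
      have h4 : ((p 1).1 : ℕ) = ((p (2*k)).1 : ℕ) := by rw [← e1, e2]
      rw [hk] at hrow
      omega
    · rw [if_neg hk]
      refine ⟨⟨by omega, by omega⟩, ?_, by omega⟩
      have e1 : (p (2*l)).1 = (p (2*l+1)).1 := (hc.2.2 l (by omega)).1
      have h3 : 2*(l+1) - 1 = 2*l+1 := by omega
      rw [h3, ← e1]
      omega
  case hj =>
    intro l hl
    simp only [Finset.mem_filter, Finset.mem_Icc] at hl ⊢
    obtain ⟨⟨hl1, hlk⟩, hrow, -⟩ := hl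
    by_cases h1 : l = 1
    · rw [if_pos h1]
      refine ⟨⟨hc.1, le_refl k⟩, ?_, by omega⟩
      have e1 : (p 0).1 = (p 1).1 := (hc.2.2 0 hc.1).1
      have e2 : p 0 = p (2*k) := hc.2.1
      have h3 : (2:ℕ)*1 - 1 = 1 := by omega
      rw [h1, h3] at hrow
      have h4 : ((p (2*k)).1 : ℕ) = ((p 1).1 : ℕ) := by rw [← e2, e1]
      omega
    · rw [if_neg h1]
      refine ⟨⟨by omega, by omega⟩, ?_, by omega⟩
      have e1 : (p (2*(l-1))).1 = (p (2*(l-1)+1)).1 := (hc.2.2 (l-1) (by omega)).1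
      have h3 : 2*(l-1)+1 = 2*l-1 := by omega
      rw [h3] at e1
      omega
  case li =>
    intro l hl
    simp only [Finset.mem_filter, Finset.mem_Icc] at hl
    obtain ⟨⟨hl1, hlk⟩, -⟩ := hl
    by_cases hk : l = k
    · simp [hk]
    · simp only [if_neg hk, if_neg (by omega : ¬ l + 1 = 1)]
      omega
  case ri =>
    intro l hl
    simp only [Finset.mem_filter, Finset.mem_Icc] at hl
    obtain ⟨⟨hl1, hlk⟩, -⟩ := hl
    by_cases h1 : l = 1
    · simp [h1]
    · simp only [if_neg h1, if_neg (by omega : ¬ l - 1 = k)]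
      omega

lemma cc_big (k : ℕ) (p : ℕ → Fin m × Fin n) (i j : ℕ) (h : m ≤ i ∨ n ≤ j) :
    cycleCount k p i j = 0 := by
  unfold cycleCount
  have h1 : ((Finset.Icc 1 k).filter fun l =>
      i < ((p (2*l)).1 : ℕ) + 1 ∧ j < ((p (2*l)).2 : ℕ) + 1) = ∅ := by
    refine Finset.filter_eq_empty_iff.mpr fun l _ => ?_
    have := (p (2*l)).1.isLt
    have := (p (2*l)).2.isLt
    rintro ⟨h1, h2⟩; omega
  have h2 : ((Finset.Icc 1 k).filter fun l =>
      i < ((p (2*l-1)).1 : ℕ) + 1 ∧ j < ((p (2*l-1)).2 : ℕ) + 1) = ∅ := by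
    refine Finset.filter_eq_empty_iff.mpr fun l _ => ?_
    have := (p (2*l-1)).1.isLt
    have := (p (2*l-1)).2.isLt
    rintro ⟨h1, h2⟩; omega
  rw [h1, h2]
  simp

lemma Dpos (hApos : ∀ i j, 0 < A i j)
    (hAtp : ∀ (i i' : Fin m) (j j' : Fin n), i < i' → j < j' →
      0 < A i j * A i' j' - A i j' * A i' j)
    (i j : ℕ) (hi1 : 1 ≤ i) (hi : i < m) (hj1 : 1 ≤ j) (hj : j < n) :
    0 < Df A hm hn i j := by
  have e11 : Gf A hm hn (i+1) (j+1) = Real.log (A ⟨i, hi⟩ ⟨j, hj⟩) := by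
    simp only [Gf, if_pos (by omega : 1 ≤ i+1 ∧ 1 ≤ j+1), Nat.add_sub_cancel]
    have e1 : min i (m-1) = i := by omega
    have e2 : min j (n-1) = j := by omega
    simp only [e1, e2]
  have e10 : Gf A hm hn (i+1) j = Real.log (A ⟨i, hi⟩ ⟨j-1, by omega⟩) := by
    simp only [Gf, if_pos (by omega : 1 ≤ i+1 ∧ 1 ≤ j), Nat.add_sub_cancel]
    have e1 : min i (m-1) = i := by omega
    have e2 : min (j-1) (n-1) = j-1 := by omega
    simp only [e1, e2]
  have e01 : Gf A hm hn i (j+1) = Real.log (A ⟨i-1, by omega⟩ ⟨j, hj⟩) := by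
    simp only [Gf, if_pos (by omega : 1 ≤ i ∧ 1 ≤ j+1), Nat.add_sub_cancel]
    have e1 : min (i-1) (m-1) = i-1 := by omega
    have e2 : min j (n-1) = j := by omega
    simp only [e1, e2]
  have e00 : Gf A hm hn i j = Real.log (A ⟨i-1, by omega⟩ ⟨j-1, by omega⟩) := by
    simp only [Gf, if_pos (by omega : 1 ≤ i ∧ 1 ≤ j)]
    have e1 : min (i-1) (m-1) = i-1 := by omega
    have e2 : min (j-1) (n-1) = j-1 := by omega
    simp only [e1, e2]
  rw [Df, e11, e10, e01, e00]
  set a := A ⟨i-1, by omega⟩ ⟨j-1, by omega⟩ with ha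
  set b := A ⟨i-1, by omega⟩ ⟨j, hj⟩ with hb
  set c := A ⟨i, hi⟩ ⟨j-1, by omega⟩ with hc
  set d := A ⟨i, hi⟩ ⟨j, hj⟩ with hd
  have hap : 0 < a := hApos _ _
  have hbp : 0 < b := hApos _ _
  have hcp : 0 < c := hApos _ _
  have hdp : 0 < d := hApos _ _
  have hmin : 0 < a * d - b * c :=
    hAtp ⟨i-1, by omega⟩ ⟨i, hi⟩ ⟨j-1, by omega⟩ ⟨j, hj⟩
      (by simp [Fin.lt_def]; omega) (by simp [Fin.lt_def]; omega)
  have hlt : Real.log (b * c) < Real.log (a * d) :=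
    Real.log_lt_log (by positivity) (by linarith)
  rw [Real.log_mul (by positivity) (by positivity),
      Real.log_mul (by positivity) (by positivity)] at hlt
  linarith

end Aux

/-- if a set S of positions contains no 2-by-2 submatrix and
some finite collection of orthogonal cycles supported in S is positive, then
no TP₂ matrix equals 1 on all of S, i.e. the all-ones partial matrix with
pattern S has no TP₂ completion. -/
theorem stmt_11 (m n : ℕ) (S : Set (Fin m × Fin n))
    (hS : ¬ ∃ (i i' : Fin m) (j j' : Fin n), i < i' ∧ j < j' ∧
        (i, j) ∈ S ∧ (i, j') ∈ S ∧ (i', j) ∈ S ∧ (i', j') ∈ S)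
    (N : ℕ) (K : Fin N → ℕ) (P : Fin N → ℕ → Fin m × Fin n)
    (hcyc : ∀ a, IsOrthoCycle (K a) (P a))
    (hsupp : ∀ a, ∀ i ≤ 2 * K a, P a i ∈ S)
    (hpos : IsPositiveCollection K P) :
    ¬ ∃ A : Matrix (Fin m) (Fin n) ℝ,
        (∀ i j, 0 < A i j) ∧
        (∀ (i i' : Fin m) (j j' : Fin n), i < i' → j < j' →
          0 < A i j * A i' j' - A i j' * A i' j) ∧
        (∀ q ∈ S, A q.1 q.2 = 1) := by
  rintro ⟨A, hApos, hAtp, hAone⟩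
  obtain ⟨i₀, j₀, hij⟩ := hpos.2
  have hN : N ≠ 0 := by
    rintro rfl
    simp at hij
  have a0 : Fin N := ⟨0, Nat.pos_of_ne_zero hN⟩
  have hm : 0 < m := (P a0 0).1.pos
  have hn : 0 < n := (P a0 0).2.pos
  -- the total weighted sum of D is zero
  have hzero : ∑ a : Fin N, ∑ i ∈ range m, ∑ j ∈ range n,
      (cycleCount (K a) (P a) i j : ℝ) * Df A hm hn i j = 0 := by
    rw [Finset.sum_congr rfl fun a _ => cyc_sum A hm hn (K a) (P a)]
    refine Finset.sum_eq_zero fun a _ => Finset.sum_eq_zero fun l hl => ?_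
    simp only [Finset.mem_Icc] at hl
    rw [hAone _ (hsupp a (2*l) (by omega)), hAone _ (hsupp a (2*l-1) (by omega))]
    simp
  -- rewrite as a single weighted sum
  have hswap : ∑ i ∈ range m, ∑ j ∈ range n,
      ((∑ a : Fin N, cycleCount (K a) (P a) i j : ℤ) : ℝ) * Df A hm hn i j = 0 := by
    rw [← hzero]
    have hpt : ∀ i j : ℕ, ((∑ a : Fin N, cycleCount (K a) (P a) i j : ℤ) : ℝ) * Df A hm hn i j
        = ∑ a : Fin N, (cycleCount (K a) (P a) i j : ℝ) * Df A hm hn i j := by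
      intro i j
      push_cast
      rw [Finset.sum_mul]
    calc ∑ i ∈ range m, ∑ j ∈ range n,
          ((∑ a : Fin N, cycleCount (K a) (P a) i j : ℤ) : ℝ) * Df A hm hn i j
        = ∑ i ∈ range m, ∑ a : Fin N, ∑ j ∈ range n,
            (cycleCount (K a) (P a) i j : ℝ) * Df A hm hn i j := by
          refine Finset.sum_congr rfl fun i _ => ?_
          rw [Finset.sum_congr rfl fun j (_ : j ∈ range n) => hpt i j]
          exact Finset.sum_comm
      _ = ∑ a : Fin N, ∑ i ∈ range m, ∑ j ∈ range n,
            (cycleCount (K a) (P a) i j : ℝ) * Df A hm hn i j := Finset.sum_comm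
  -- each term is nonnegative
  have hT0 : ∀ i ∈ range m, ∀ j ∈ range n,
      0 ≤ ((∑ a : Fin N, cycleCount (K a) (P a) i j : ℤ) : ℝ) * Df A hm hn i j := by
    intro i hi j hj
    simp only [Finset.mem_range] at hi hj
    rcases Nat.eq_zero_or_pos i with rfl | hi1
    · rw [Finset.sum_eq_zero fun a _ => cc_col (K a) (P a) (hcyc a) j]
      simp
    rcases Nat.eq_zero_or_pos j with rfl | hj1
    · rw [Finset.sum_eq_zero fun a _ => cc_row (K a) (P a) (hcyc a) i]
      simp
    exact mul_nonneg (by exact_mod_cast hpos.1 i j)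
      (le_of_lt (Dpos A hm hn hApos hAtp i j hi1 hi hj1 hj))
  -- the distinguished term is positive
  have hi₀m : i₀ < m := by
    by_contra h
    rw [Finset.sum_eq_zero
      (fun a _ => cc_big (K a) (P a) i₀ j₀ (Or.inl (by omega)))] at hij
    exact lt_irrefl 0 hij
  have hj₀n : j₀ < n := by
    by_contra h
    rw [Finset.sum_eq_zero
      (fun a _ => cc_big (K a) (P a) i₀ j₀ (Or.inr (by omega)))] at hij
    exact lt_irrefl 0 hij
  have hi₀1 : 1 ≤ i₀ := by
    by_contra h
    have hz : i₀ = 0 := by omega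
    subst hz
    rw [Finset.sum_eq_zero fun a _ => cc_col (K a) (P a) (hcyc a) j₀] at hij
    exact lt_irrefl 0 hij
  have hj₀1 : 1 ≤ j₀ := by
    by_contra h
    have hz : j₀ = 0 := by omega
    subst hz
    rw [Finset.sum_eq_zero fun a _ => cc_row (K a) (P a) (hcyc a) i₀] at hij
    exact lt_irrefl 0 hij
  have hTpos : 0 < ((∑ a : Fin N, cycleCount (K a) (P a) i₀ j₀ : ℤ) : ℝ)
      * Df A hm hn i₀ j₀ :=
    mul_pos (by exact_mod_cast hij) (Dpos A hm hn hApos hAtp i₀ j₀ hi₀1 hi₀m hj₀1 hj₀n)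
  have hsumpos : 0 < ∑ i ∈ range m, ∑ j ∈ range n,
      ((∑ a : Fin N, cycleCount (K a) (P a) i j : ℤ) : ℝ) * Df A hm hn i j := by
    rw [← Finset.sum_product']
    refine Finset.sum_pos' (fun x hx => ?_) ⟨(i₀, j₀), ?_, hTpos⟩
    · rcases Finset.mem_product.mp hx with ⟨h1, h2⟩
      exact hT0 x.1 h1 x.2 h2
    · exact Finset.mem_product.mpr ⟨Finset.mem_range.mpr hi₀m, Finset.mem_range.mpr hj₀n⟩
  rw [hswap] at hsumpos
  exact lt_irrefl 0 hsumpos
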